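/- (Grabiner–Magyar) Let d ≥ 1 and let λ, μ ∈ ℤ^d be points with λ_1 > λ_2 > … > λ_d > 0 and μ_1 > μ_2 > … > μ_d > 0. For n ≥ 0 let w_n be the number of sequences p_0 = λ, p_1, …, p_n = μ of points of ℤ^d such that each difference p_{m+1} − p_m belongs to {e_1, −e_1, …, e_d, −e_d} and every p_m satisfies (p_m)_1 > (p_m)_2 > … > (p_m)_d > 0. Then the formal power series identity Σ_{n≥0} w_n t^n/n! = det( b_{μ_i − λ_j} − b_{μ_i + λ_j} )_{1≤i,j≤d} holds in ℚ[[t]]. -/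

import Mathlib

/-- The hyperbolic Bessel function `b_j = I_{|j|}(2t) = Σ_{n≥0} t^(2n+|j|)/(n!·(n+|j|)!)`
as a formal power series in `ℚ⟦t⟧`; note `b_{-j} = b_j`. -/
noncomputable def besselB (j : ℤ) : PowerSeries ℚ :=
  PowerSeries.mk fun m =>
    if j.natAbs ≤ m ∧ (m - j.natAbs) % 2 = 0 then
      1 / ((((m - j.natAbs) / 2).factorial : ℚ) *
        (((m - j.natAbs) / 2 + j.natAbs).factorial : ℚ))
    else 0

open PowerSeries Matrix Finset

namespace GM



noncomputable def c (a m : ℕ) : ℚ :=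
  if a ≤ m ∧ (m - a) % 2 = 0 then
    1 / ((((m - a) / 2).factorial : ℚ) * (((m - a) / 2 + a).factorial : ℚ))
  else 0

lemma coeff_besselB (j : ℤ) (m : ℕ) :
    PowerSeries.coeff m (besselB j) = c j.natAbs m := by
  simp [besselB, c]

lemma besselB_neg (j : ℤ) : besselB (-j) = besselB j := by
  simp [besselB, Int.natAbs_neg]

lemma coeff_zero_besselB (j : ℤ) :
    PowerSeries.constantCoeff (besselB j) = if j = 0 then 1 else 0 := by
  rw [← PowerSeries.coeff_zero_eq_constantCoeff, coeff_besselB]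
  unfold c
  by_cases h : j = 0
  · subst h
    rw [if_pos rfl, if_pos (by simp)]
    simp
  · rw [if_neg h, if_neg ?_]
    have : 0 < j.natAbs := Int.natAbs_pos.mpr h
    omega

lemma fact_ne (k : ℕ) : ((k.factorial : ℚ)) ≠ 0 :=
  Nat.cast_ne_zero.2 (Nat.factorial_ne_zero _)

lemma key0 (m : ℕ) : c 0 (m + 1) * (m + 1) = 2 * c 1 m := by
  unfold c
  rcases Nat.even_or_odd m with ⟨k, rfl⟩ | ⟨k, rfl⟩
  · rw [if_neg (by omega), if_neg (by omega)]; ring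
  · rw [if_pos (by omega), if_pos (by omega)]
    have h1 : (2 * k + 1 + 1 - 0) / 2 = k + 1 := by omega
    have h2 : (2 * k + 1 - 1) / 2 = k := by omega
    rw [h1, h2]
    rw [Nat.add_zero, Nat.factorial_succ (k)]
    push_cast
    field_simp
    ring

lemma key1 (a m : ℕ) : c (a + 1) (m + 1) * (m + 1) = c (a + 2) m + c a m := by
  unfold c
  by_cases hL : a ≤ m ∧ (m - a) % 2 = 0
  · obtain ⟨n, rfl⟩ : ∃ n, m = 2 * n + a := ⟨(m - a) / 2, by omega⟩
    rw [if_pos (by omega)]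
    have h1 : (2 * n + a + 1 - (a + 1)) / 2 = n := by omega
    rw [h1]
    rcases Nat.eq_zero_or_pos n with rfl | hn
    · rw [if_neg (by omega), if_pos (by omega)]
      have h2 : (2 * 0 + a - a) / 2 = 0 := by omega
      rw [h2]
      simp only [Nat.factorial_zero, Nat.zero_add, Nat.mul_zero]
      rw [Nat.factorial_succ a]
      push_cast
      field_simp
      ring
    · obtain ⟨k, rfl⟩ : ∃ k, n = k + 1 := ⟨n - 1, by omega⟩
      rw [if_pos (by omega), if_pos (by omega)]
      have h2 : (2 * (k + 1) + a - (a + 2)) / 2 = k := by omega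
      have h3 : (2 * (k + 1) + a - a) / 2 = k + 1 := by omega
      rw [h2, h3]
      have e1 : k + (a + 2) = (k + 1 + a) + 1 := by ring
      have e2 : k + 1 + (a + 1) = (k + 1 + a) + 1 := by ring
      rw [e1, e2, Nat.factorial_succ (k + 1 + a), Nat.factorial_succ k]
      push_cast
      field_simp
      ring
  · rw [if_neg (by omega), if_neg (by omega), if_neg (by omega)]; ring

lemma derivative_besselB_nat (a : ℕ) :
    PowerSeries.derivative ℚ (besselB (a + 1 : ℕ)) =
      besselB (a : ℕ) + besselB (a + 2 : ℕ) := by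
  ext m
  rw [PowerSeries.coeff_derivative, map_add, coeff_besselB, coeff_besselB, coeff_besselB]
  simp only [Int.natAbs_natCast]
  rw [key1 a m]; ring

lemma derivative_besselB_zero :
    PowerSeries.derivative ℚ (besselB 0) = 2 * besselB 1 := by
  ext m
  rw [PowerSeries.coeff_derivative, coeff_besselB]
  have : ((PowerSeries.coeff m) (2 * besselB 1)) = 2 * c 1 m := by
    rw [two_mul, map_add, coeff_besselB]; norm_num; ring
  rw [this, ← key0]
  simp

lemma derivative_besselB (j : ℤ) :
    PowerSeries.derivative ℚ (besselB j) = besselB (j - 1) + besselB (j + 1) := by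
  have main : ∀ a : ℕ, PowerSeries.derivative ℚ (besselB (a : ℤ)) =
      besselB ((a : ℤ) - 1) + besselB ((a : ℤ) + 1) := by
    intro a
    cases a with
    | zero =>
      simp only [Nat.cast_zero, zero_sub, zero_add, besselB_neg]
      rw [derivative_besselB_zero]; ring
    | succ b =>
      have := derivative_besselB_nat b
      push_cast at this ⊢
      rw [show ((b : ℤ) + 1 - 1) = (b : ℤ) from by ring] at *
      convert this using 2
      ring_nf
  rcases Int.natAbs_eq j with h | h
  · rw [h]; exact main _
  · rw [h, besselB_neg, show (-(j.natAbs : ℤ) - 1) = -((j.natAbs : ℤ) + 1) from by ring,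
      show (-(j.natAbs : ℤ) + 1) = -((j.natAbs : ℤ) - 1) from by ring,
      besselB_neg, besselB_neg, add_comm]
    exact main _



variable {A : Type*} [CommRing A] [Algebra ℚ A]

lemma derivation_prod {ι : Type*} [DecidableEq ι] (D : Derivation ℚ A A) (s : Finset ι)
    (f : ι → A) :
    D (∏ i ∈ s, f i) = ∑ i ∈ s, (∏ j ∈ s.erase i, f j) * D (f i) := by
  induction s using Finset.induction with
  | empty => simp
  | @insert a s ha ih =>
    rw [Finset.prod_insert ha, D.leibniz, ih, Finset.sum_insert ha, Finset.erase_insert ha,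
      smul_eq_mul, smul_eq_mul, Finset.mul_sum, add_comm]
    congr 1
    apply Finset.sum_congr rfl
    intro i hi
    rw [Finset.erase_insert_of_ne (by rintro rfl; exact ha hi),
      Finset.prod_insert (by simp [ha, Finset.mem_erase])]
    ring

lemma derivation_det {d : ℕ} (D : Derivation ℚ A A) (M : Matrix (Fin d) (Fin d) A) :
    D M.det = ∑ i, (M.updateCol i (fun r => D (M r i))).det := by
  classical
  calc D M.det
      = ∑ σ : Equiv.Perm (Fin d), Equiv.Perm.sign σ •
          ∑ i, (∏ j ∈ Finset.univ.erase i, M (σ j) j) * D (M (σ i) i) := by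
        rw [Matrix.det_apply, map_sum]
        refine Finset.sum_congr rfl fun σ _ => ?_
        rw [Units.smul_def, Units.smul_def, map_zsmul, derivation_prod]
    _ = ∑ i, ∑ σ : Equiv.Perm (Fin d), Equiv.Perm.sign σ •
          ((∏ j ∈ Finset.univ.erase i, M (σ j) j) * D (M (σ i) i)) := by
        simp_rw [Finset.smul_sum]; exact Finset.sum_comm
    _ = ∑ i, (M.updateCol i (fun r => D (M r i))).det := by
        refine Finset.sum_congr rfl fun i _ => ?_
        rw [Matrix.det_apply]
        refine Finset.sum_congr rfl fun σ _ => ?_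
        congr 1
        rw [← Finset.mul_prod_erase _
              (fun j => (M.updateCol i fun r => D (M r i)) (σ j) j) (Finset.mem_univ i),
          Matrix.updateCol_self, mul_comm]
        congr 1
        refine Finset.prod_congr rfl fun j hj => ?_
        rw [Matrix.updateCol_ne (Finset.ne_of_mem_erase hj)]



variable {d : ℕ}

noncomputable def F (lam μ : Fin d → ℤ) : PowerSeries ℚ :=
  (Matrix.of fun i j : Fin d => besselB (μ i - lam j) - besselB (μ i + lam j)).det

lemma F_wall_eq (lam μ : Fin d → ℤ) {i j : Fin d} (hij : i ≠ j) (h : μ i = μ j) :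
    F lam μ = 0 := by
  apply Matrix.det_zero_of_row_eq hij
  funext k
  simp [Matrix.of_apply, h]

lemma F_wall_zero (lam μ : Fin d → ℤ) {i : Fin d} (h : μ i = 0) :
    F lam μ = 0 := by
  apply Matrix.det_eq_zero_of_row_eq_zero i
  intro j
  simp only [Matrix.of_apply, h, zero_sub, zero_add, besselB_neg, sub_self]

/-- derivative of entries only touches the row, giving neighbor determinants -/
lemma derivative_F (lam μ : Fin d → ℤ) :
    PowerSeries.derivative ℚ (F lam μ) =
      ∑ i, (F lam (μ + Pi.single i 1) + F lam (μ - Pi.single i 1)) := by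
  unfold F
  -- work with transposed matrix so rows become columns
  set M : Matrix (Fin d) (Fin d) (PowerSeries ℚ) :=
    Matrix.of fun i j : Fin d => besselB (μ i - lam j) - besselB (μ i + lam j) with hM
  rw [← Matrix.det_transpose M, derivation_det]
  refine Finset.sum_congr rfl fun i _ => ?_
  have hrow : (fun r => PowerSeries.derivative ℚ (Mᵀ r i)) =
      (fun r => (besselB ((μ i + 1) - lam r) - besselB ((μ i + 1) + lam r)) +
        (besselB ((μ i - 1) - lam r) - besselB ((μ i - 1) + lam r))) := by
    funext r
    simp only [Matrix.transpose_apply, hM, Matrix.of_apply, map_sub, derivative_besselB]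
    ring_nf
  rw [hrow]
  have hupd : ∀ x : ℤ,
      Matrix.updateCol Mᵀ i (fun r => besselB (x - lam r) - besselB (x + lam r)) =
      (Matrix.of fun a b : Fin d =>
        besselB (Function.update μ i x a - lam b) -
          besselB (Function.update μ i x a + lam b))ᵀ := by
    intro x
    ext a b
    rw [Matrix.transpose_apply, Matrix.updateCol_apply]
    by_cases hb : b = i
    · subst hb; simp [Matrix.of_apply]
    · simp [hb, hM, Matrix.of_apply, Function.update_of_ne hb]
  have h1 : Function.update μ i (μ i + 1) = μ + Pi.single i 1 := by
    funext k
    by_cases hk : k = i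
    · subst hk; simp
    · simp [Function.update_of_ne hk, Pi.single_eq_of_ne hk]
  have h2 : Function.update μ i (μ i - 1) = μ - Pi.single i 1 := by
    funext k
    by_cases hk : k = i
    · subst hk; simp
    · simp [Function.update_of_ne hk, Pi.single_eq_of_ne hk]
  rw [show (fun r => besselB (μ i + 1 - lam r) - besselB (μ i + 1 + lam r) +
      (besselB (μ i - 1 - lam r) - besselB (μ i - 1 + lam r))) =
    (fun r => besselB (μ i + 1 - lam r) - besselB (μ i + 1 + lam r)) +
      (fun r => besselB (μ i - 1 - lam r) - besselB (μ i - 1 + lam r)) from rfl,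
    Matrix.det_updateCol_add, hupd (μ i + 1), hupd (μ i - 1),
    Matrix.det_transpose, Matrix.det_transpose, h1, h2]



lemma constantCoeff_F (lam μ : Fin d → ℤ) (hlam : StrictAnti lam) (hlam0 : ∀ i, 0 < lam i)
    (hμ : StrictAnti μ) (hμ0 : ∀ i, 0 < μ i) :
    PowerSeries.constantCoeff (F lam μ) = if lam = μ then 1 else 0 := by
  unfold F
  rw [RingHom.map_det, RingHom.mapMatrix_apply]
  have hmat : (Matrix.of fun i j : Fin d =>
      besselB (μ i - lam j) - besselB (μ i + lam j)).map (PowerSeries.constantCoeff) =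
      Matrix.of fun i j : Fin d => if μ i = lam j then (1 : ℚ) else 0 := by
    ext i j
    simp only [Matrix.map_apply, Matrix.of_apply, map_sub, coeff_zero_besselB]
    rw [if_neg (show ¬(μ i + lam j = 0) by have := hμ0 i; have := hlam0 j; omega), sub_zero]
    congr 1
    simp [sub_eq_zero]
  rw [hmat]
  by_cases h : lam = μ
  · subst h
    rw [if_pos rfl]
    have : (Matrix.of fun i j : Fin d => if lam i = lam j then (1 : ℚ) else 0) = 1 := by
      ext i j
      by_cases hij : i = j
      · subst hij; simp [Matrix.one_apply]
      · rw [Matrix.of_apply, if_neg (fun hc => hij (hlam.injective hc)),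
          Matrix.one_apply_ne hij]
    rw [this, Matrix.det_one]
  · rw [if_neg h, Matrix.det_apply]
    apply Finset.sum_eq_zero
    intro σ _
    by_cases hσ : ∀ i, μ (σ i) = lam i
    · exfalso
      have hσmono : StrictMono σ := by
        intro i j hij
        have h1 : lam j < lam i := hlam hij
        rw [← hσ i, ← hσ j] at h1
        exact hμ.lt_iff_gt.mp h1
      have hid : (σ : Fin d → Fin d) = id := by
        have hr : Set.range (σ : Fin d → Fin d) = Set.range (id : Fin d → Fin d) := by
          simp [Set.range_eq_univ.2 σ.surjective]
        set_option linter.deprecated false in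
        exact (hσmono.range_inj strictMono_id).mp hr
      apply h
      funext i
      have := hσ i
      rw [show σ i = i from congrFun hid i] at this
      exact this.symm
    · push_neg at hσ
      obtain ⟨i, hi⟩ := hσ
      rw [Finset.prod_eq_zero (Finset.mem_univ i) (by simp [Matrix.of_apply, hi]), smul_zero]


def WalkT (d n : ℕ) (lam mu : Fin d → ℤ) : Type :=
  {p : Fin (n + 1) → Fin d → ℤ //
    p 0 = lam ∧ p (Fin.last n) = mu ∧
    (∀ m : Fin n, ∃ i : Fin d,
      p m.succ - p m.castSucc = Pi.single i 1 ∨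
      p m.succ - p m.castSucc = -Pi.single i 1) ∧
    ∀ m : Fin (n + 1), StrictAnti (p m) ∧ ∀ i : Fin d, 0 < p m i}

noncomputable def W (d n : ℕ) (lam mu : Fin d → ℤ) : ℕ := Nat.card (WalkT d n lam mu)

instance walkFinite (d n : ℕ) (lam mu : Fin d → ℤ) : Finite (WalkT d n lam mu) := by
  classical
  let S : Finset (Fin d → ℤ) := Finset.image
    (fun ib : Fin d × Bool => if ib.2 then Pi.single ib.1 1 else -Pi.single ib.1 1)
    Finset.univ
  let T := Fintype.piFinset (fun _ : Fin n => S)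
  apply Finite.of_injective (fun p : WalkT d n lam mu =>
    (⟨fun m => p.1 m.succ - p.1 m.castSucc, by
      rw [Fintype.mem_piFinset]
      intro m
      obtain ⟨i, h | h⟩ := p.2.2.2.1 m
      · exact Finset.mem_image.2 ⟨(i, true), Finset.mem_univ _, by simpa using h.symm⟩
      · exact Finset.mem_image.2 ⟨(i, false), Finset.mem_univ _, by simpa using h.symm⟩⟩ : T))
  intro p q h
  have hsteps : ∀ m : Fin n, p.1 m.succ - p.1 m.castSucc = q.1 m.succ - q.1 m.castSucc :=
    fun m => congrFun (congrArg Subtype.val h) m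
  apply Subtype.ext
  funext m
  induction m using Fin.induction with
  | zero => rw [p.2.1, q.2.1]
  | succ j ih =>
    have h2 := hsteps j
    rw [ih] at h2
    exact sub_left_inj.mp h2

lemma W_not_chamber (d n : ℕ) (lam mu : Fin d → ℤ)
    (h : ¬(StrictAnti mu ∧ ∀ i, 0 < mu i)) : W d n lam mu = 0 := by
  have : IsEmpty (WalkT d n lam mu) :=
    ⟨fun p => h (by rw [← p.2.2.1]; exact p.2.2.2.2 (Fin.last n))⟩
  simp [W, Nat.card_of_isEmpty]

lemma W_zero (d : ℕ) (lam mu : Fin d → ℤ) (hlam : StrictAnti lam) (hlam0 : ∀ i, 0 < lam i) :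
    W d 0 lam mu = if lam = mu then 1 else 0 := by
  by_cases h : lam = mu
  · subst h
    rw [if_pos rfl]
    have : Unique (WalkT d 0 lam lam) :=
      { default := ⟨fun _ => lam, rfl, rfl, fun m => m.elim0, fun _ => ⟨hlam, hlam0⟩⟩
        uniq := fun p => by
          apply Subtype.ext
          funext m
          have hm : m = 0 := Fin.eq_zero m
          rw [hm, p.2.1] }
    rw [W, Nat.card_unique]
  · rw [if_neg h]
    have : IsEmpty (WalkT d 0 lam mu) := ⟨fun p => by
      have e2 : p.1 0 = mu := p.2.2.1
      exact h (p.2.1.symm.trans e2)⟩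
    simp [W, Nat.card_of_isEmpty]

def dir {d : ℕ} (c : Fin d × Bool) : Fin d → ℤ :=
  if c.2 then Pi.single c.1 1 else -Pi.single c.1 1

lemma dir_supp {d : ℕ} (c : Fin d × Bool) (k : Fin d) (hk : k ≠ c.1) : dir c k = 0 := by
  obtain ⟨i, b⟩ := c
  cases b <;> simp_all [dir, Pi.single_eq_of_ne hk]

lemma dir_val {d : ℕ} (c : Fin d × Bool) (k : Fin d) :
    dir c k = 0 ∨ dir c k = 1 ∨ dir c k = -1 := by
  obtain ⟨i, b⟩ := c
  by_cases hk : k = i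
  · subst hk; cases b <;> simp [dir]
  · cases b <;> simp [dir, Pi.single_eq_of_ne hk]

lemma dir_injective {d : ℕ} : Function.Injective (dir (d := d)) := by
  rintro ⟨i, b⟩ ⟨i', b'⟩ h
  have hii' : i = i' := by
    by_contra hne
    have h1 := congrFun h i
    rw [dir_supp (i', b') i (by simpa using hne)] at h1
    cases b <;> simp [dir] at h1
  subst hii'
  have hbb : b = b' := by
    by_contra hne
    have h1 := congrFun h i
    cases b <;> cases b' <;> simp [dir] at h1 hne ⊢
  subst hbb
  rfl







lemma neighbor_cases {d : ℕ} (μ : Fin d → ℤ) (hμ : StrictAnti μ) (hμ0 : ∀ i, 0 < μ i)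
    (c : Fin d × Bool) :
    (StrictAnti (μ - dir c) ∧ ∀ i, 0 < (μ - dir c) i) ∨
      (∃ i j : Fin d, i ≠ j ∧ (μ - dir c) i = (μ - dir c) j) ∨
      (∃ i, (μ - dir c) i = 0) := by
  set ν := μ - dir c with hν
  have hνk : ∀ k, ν k = μ k - dir c k := fun k => rfl
  have hmono : ∀ i j : Fin d, i < j → ν j ≤ ν i := by
    intro i j hij
    have h1 : μ j < μ i := hμ hij
    have hne : i ≠ j := ne_of_lt hij
    rw [hνk i, hνk j]
    by_cases hi : i = c.1
    · have hj : dir c j = 0 := dir_supp c j (fun hcon => hne (hi.trans hcon.symm))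
      rcases dir_val c i with h' | h' | h' <;> omega
    · have hi0 : dir c i = 0 := dir_supp c i hi
      rcases dir_val c j with h' | h' | h' <;> omega
  have hpos : ∀ i, 0 ≤ ν i := by
    intro i
    have := hμ0 i
    rw [hνk i]
    rcases dir_val c i with h' | h' | h' <;> omega
  by_cases hsa : StrictAnti ν
  · by_cases hp : ∀ i, 0 < ν i
    · exact Or.inl ⟨hsa, hp⟩
    · push_neg at hp
      obtain ⟨i, hi⟩ := hp
      exact Or.inr (Or.inr ⟨i, le_antisymm hi (hpos i)⟩)
  · refine Or.inr (Or.inl ?_)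
    unfold StrictAnti at hsa
    push_neg at hsa
    obtain ⟨i, j, hij, hle⟩ := hsa
    exact ⟨i, j, ne_of_lt hij, le_antisymm hle (hmono i j hij)⟩

/-- counting a sigma type -/
lemma nat_card_sigma {ι : Type*} [Fintype ι] (f : ι → Type*) [∀ i, Finite (f i)] :
    Nat.card (Σ i, f i) = ∑ i, Nat.card (f i) := by
  classical
  have : ∀ i, Fintype (f i) := fun i => Fintype.ofFinite _
  simp [Nat.card_eq_fintype_card]


def walkSnoc {d : ℕ} (n : ℕ) (lam mu : Fin d → ℤ) (hmu : StrictAnti mu)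
    (hmu0 : ∀ i, 0 < mu i)
    (x : Σ c : Fin d × Bool, WalkT d n lam (mu - dir c)) : WalkT d (n + 1) lam mu :=
  ⟨Fin.snoc x.2.1 mu, by
    have h0 := x.2.2.1
    have hlast := x.2.2.2.1
    have hsteps := x.2.2.2.2.1
    have hcham := x.2.2.2.2.2
    have hdirstep : ∃ i : Fin d,
        dir x.1 = Pi.single i 1 ∨ dir x.1 = -Pi.single i 1 := by
      obtain ⟨i, b⟩ := x.1
      exact ⟨i, by cases b <;> simp [dir]⟩
    refine ⟨?_, ?_, ?_, ?_⟩
    · rw [show (0 : Fin (n + 1 + 1)) = Fin.castSucc 0 from rfl, Fin.snoc_castSucc]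
      exact h0
    · rw [Fin.snoc_last]
    · intro m
      refine Fin.lastCases ?_ ?_ m
      · obtain ⟨i, hi⟩ := hdirstep
        refine ⟨i, ?_⟩
        rw [Fin.succ_last, Fin.snoc_last, Fin.snoc_castSucc, hlast, sub_sub_cancel]
        exact hi
      · intro j
        obtain ⟨i, hi⟩ := hsteps j
        refine ⟨i, ?_⟩
        rw [Fin.succ_castSucc, Fin.snoc_castSucc, Fin.snoc_castSucc]
        exact hi
    · intro m
      refine Fin.lastCases ?_ ?_ m
      · rw [Fin.snoc_last]; exact ⟨hmu, hmu0⟩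
      · intro j
        rw [Fin.snoc_castSucc]
        exact hcham j⟩

lemma W_succ {d : ℕ} (n : ℕ) (lam mu : Fin d → ℤ) (hmu : StrictAnti mu)
    (hmu0 : ∀ i, 0 < mu i) :
    W d (n + 1) lam mu = ∑ c : Fin d × Bool, W d n lam (mu - dir c) := by
  classical
  have hbij : Function.Bijective (walkSnoc n lam mu hmu hmu0) := by
    constructor
    · rintro ⟨c, q, hq⟩ ⟨c', q', hq'⟩ h
      have hval : (Fin.snoc q mu : Fin (n + 1 + 1) → Fin d → ℤ) = Fin.snoc q' mu :=
        congrArg Subtype.val h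
      have hqq : q = q' := by
        have := congrArg (fun f => Fin.init f) hval
        simpa [Fin.init_snoc] using this
      have hcc : c = c' := by
        apply dir_injective
        have e1 : q (Fin.last n) = mu - dir c := hq.2.1
        have e2 : q' (Fin.last n) = mu - dir c' := hq'.2.1
        rw [hqq] at e1
        have : mu - dir c = mu - dir c' := e1.symm.trans e2
        have := sub_right_injective this
        exact this
      subst hcc
      subst hqq
      rfl
    · rintro ⟨p, h0, hlast, hsteps, hcham⟩
      obtain ⟨i, hstep⟩ := hsteps (Fin.last n)
      have hc : ∃ c : Fin d × Bool,
          p (Fin.last n).succ - p (Fin.last n).castSucc = dir c := by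
        rcases hstep with h | h
        · exact ⟨(i, true), by simpa [dir] using h⟩
        · exact ⟨(i, false), by simpa [dir] using h⟩
      obtain ⟨c, hc⟩ := hc
      have hinit_last : Fin.init p (Fin.last n) = mu - dir c := by
        rw [Fin.init]
        rw [← hc, Fin.succ_last, hlast]
        abel
      refine ⟨⟨c, ⟨Fin.init p, ?_, hinit_last, ?_, ?_⟩⟩, ?_⟩
      · rw [show Fin.init p 0 = p 0 from rfl]
        exact h0
      · intro m
        obtain ⟨i', hi'⟩ := hsteps m.castSucc
        refine ⟨i', ?_⟩
        have e1 : Fin.init p m.succ = p m.castSucc.succ := by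
          rw [Fin.init, Fin.succ_castSucc]
        have e2 : Fin.init p m.castSucc = p m.castSucc.castSucc := rfl
        rw [e1, e2]
        exact hi'
      · intro m
        exact hcham m.castSucc
      · apply Subtype.ext
        show Fin.snoc (Fin.init p) mu = p
        rw [← hlast]
        exact Fin.snoc_init_self p
  have key : Nat.card (Σ c : Fin d × Bool, WalkT d n lam (mu - dir c)) =
      W d (n + 1) lam mu := Nat.card_eq_of_bijective _ hbij
  rw [← key, nat_card_sigma]
  rfl


lemma main_count {d : ℕ} (lam : Fin d → ℤ) (hlam : StrictAnti lam) (hlam0 : ∀ i, 0 < lam i) :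
    ∀ n (μ : Fin d → ℤ), StrictAnti μ → (∀ i, 0 < μ i) →
      (W d n lam μ : ℚ) = (n.factorial : ℚ) * PowerSeries.coeff n (F lam μ) := by
  intro n
  induction n with
  | zero =>
    intro μ hμ hμ0
    rw [W_zero d lam μ hlam hlam0, Nat.factorial_zero, Nat.cast_one, one_mul,
      PowerSeries.coeff_zero_eq_constantCoeff, constantCoeff_F lam μ hlam hlam0 hμ hμ0]
    split_ifs <;> simp
  | succ n ih =>
    intro μ hμ hμ0
    have hD : PowerSeries.coeff n (PowerSeries.derivative ℚ (F lam μ)) =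
        PowerSeries.coeff (n + 1) (F lam μ) * (n + 1) :=
      PowerSeries.coeff_derivative _ _
    have hRHS : (((n + 1).factorial : ℚ)) * PowerSeries.coeff (n + 1) (F lam μ)
        = (n.factorial : ℚ) * PowerSeries.coeff n
            (PowerSeries.derivative ℚ (F lam μ)) := by
      rw [hD, Nat.factorial_succ]
      push_cast
      ring
    have hterm : ∀ c : Fin d × Bool, (W d n lam (μ - dir c) : ℚ) =
        (n.factorial : ℚ) * PowerSeries.coeff n (F lam (μ - dir c)) := by
      intro c
      rcases neighbor_cases μ hμ hμ0 c with ⟨h1, h2⟩ | ⟨i', j', hij, he⟩ | ⟨i', he⟩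
      · exact ih _ h1 h2
      · have hnc : ¬(StrictAnti (μ - dir c) ∧ ∀ i, 0 < (μ - dir c) i) :=
          fun hc => hij (hc.1.injective he)
        rw [W_not_chamber _ _ _ _ hnc, F_wall_eq lam _ hij he]
        simp
      · have hnc : ¬(StrictAnti (μ - dir c) ∧ ∀ i, 0 < (μ - dir c) i) := by
          rintro ⟨-, hc⟩
          have := hc i'
          omega
        rw [W_not_chamber _ _ _ _ hnc, F_wall_zero lam _ he]
        simp
    rw [hRHS, derivative_F, map_sum, W_succ n lam μ hμ hμ0, Nat.cast_sum,
      Fintype.sum_prod_type, Finset.mul_sum]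
    apply Finset.sum_congr rfl
    intro i _
    rw [Fintype.sum_bool, hterm (i, true), hterm (i, false)]
    have e1 : μ - dir (i, true) = μ - Pi.single i 1 := by simp [dir]
    have e2 : μ - dir (i, false) = μ + Pi.single i 1 := by simp [dir, sub_neg_eq_add]
    rw [e1, e2, map_add]
    ring

end GM

/-- Grabiner–Magyar: the exponential generating function of simple walks from `λ` to `μ`
staying in the strict chamber `x_1 > x_2 > … > x_d > 0` equals
`det(b_{μ_i−λ_j} − b_{μ_i+λ_j})_{1≤i,j≤d}`. -/
theorem grabiner_magyar (d : ℕ) (hd : 1 ≤ d) (lam mu : Fin d → ℤ)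
    (hlam : StrictAnti lam) (hlam0 : ∀ i, 0 < lam i)
    (hmu : StrictAnti mu) (hmu0 : ∀ i, 0 < mu i) :
    PowerSeries.mk (fun n =>
      (Nat.card {p : Fin (n + 1) → Fin d → ℤ //
        p 0 = lam ∧ p (Fin.last n) = mu ∧
        (∀ m : Fin n, ∃ i : Fin d,
          p m.succ - p m.castSucc = Pi.single i 1 ∨
          p m.succ - p m.castSucc = -Pi.single i 1) ∧
        ∀ m : Fin (n + 1), StrictAnti (p m) ∧ ∀ i : Fin d, 0 < p m i} : ℚ) /
        n.factorial) =
      Matrix.det (Matrix.of fun i j : Fin d =>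
        besselB (mu i - lam j) - besselB (mu i + lam j)) := by
  apply PowerSeries.ext
  intro n
  rw [PowerSeries.coeff_mk]
  have h := GM.main_count lam hlam hlam0 n mu hmu hmu0
  show ((GM.W d n lam mu : ℚ)) / n.factorial =
    PowerSeries.coeff n (GM.F lam mu)
  rw [h, mul_comm, mul_div_assoc, div_self (GM.fact_ne n), mul_one]
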